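/- Howlett's matrix form of the Coxeter element: let R be a commutative ring and A an n×n matrix over R with all diagonal entries equal to 2. Write A = L + U, where L is the lower-triangular matrix with unit diagonal whose strictly lower entries agree with A, and U is the upper-triangular matrix with unit diagonal whose strictly upper entries agree with A. For each k, let S_k = I − E_{kk}·A, where E_{kk} is the matrix unit (so S_k sends the j-th standard basis vector e_j to e_j − a_{kj}e_k). Then S_1·S_2·⋯·S_n = −U^{-1}·L. -/

import Mathlib

/-- Howlett's matrix form of the Coxeter element: for a square matrix `A` over a
commutative ring with all diagonal entries `2`, writing `A = L + U` with `L`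
lower unitriangular and `U` upper unitriangular (agreeing with `A` strictly
below/above the diagonal), and `S k = I - E_{kk} A`, the product
`S 1 ⋯ S n` equals `-U⁻¹ L`. -/
theorem howlett_coxeter_matrix {R : Type*} [CommRing R] {n : ℕ}
    (A : Matrix (Fin n) (Fin n) R) (hdiag : ∀ i, A i i = 2) :
    (((List.finRange n).map
        (fun k => (1 : Matrix (Fin n) (Fin n) R) - Matrix.single k k 1 * A)).prod) =
      -((Matrix.of fun i j => if i = j then (1 : R) else if i < j then A i j else 0)⁻¹ *
        (Matrix.of fun i j => if i = j then (1 : R) else if j < i then A i j else 0)) := by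
  set U : Matrix (Fin n) (Fin n) R :=
    Matrix.of fun i j => if i = j then (1 : R) else if i < j then A i j else 0 with hU
  set Lm : Matrix (Fin n) (Fin n) R :=
    Matrix.of fun i j => if i = j then (1 : R) else if j < i then A i j else 0 with hLm
  set F : ℕ → Matrix (Fin n) (Fin n) R :=
    fun m => Matrix.of fun i j => if i = j ∧ (i : ℕ) < m then 1 else 0 with hF
  set l : List (Matrix (Fin n) (Fin n) R) := (List.finRange n).map
      (fun k => (1 : Matrix (Fin n) (Fin n) R) - Matrix.single k k 1 * A) with hl
  have hlen : l.length = n := by simp [hl]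
  -- entry lemma for column k of U - F k * A
  have hentry : ∀ (k i : Fin n), (U - F k.val * A) i k = if i = k then 1 else 0 := by
    intro k i
    have hFA : (F k.val * A) i k = if (i : ℕ) < (k : ℕ) then A i k else 0 := by
      rw [Matrix.mul_apply, Finset.sum_eq_single i]
      · simp [hF]
      · intro b _ hb
        simp [hF, hb.symm]
      · simp
    rw [Matrix.sub_apply, hFA]
    rcases lt_trichotomy i k with h | h | h
    · have h1 : (i : ℕ) < (k : ℕ) := h
      simp [hU, h1, h.ne, h]
    · subst h
      simp [hU]
    · have h1 : ¬ ((i : ℕ) < (k : ℕ)) := not_lt.mpr (Fin.le_iff_val_le_val.mp h.le)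
      have h2 : ¬ i < k := not_lt.mpr h.le
      simp [hU, h1, h2, h.ne']
  -- column lemma
  have hcol : ∀ k : Fin n, (U - F k.val * A) * Matrix.single k k (1 : R)
      = Matrix.single k k (1 : R) := by
    intro k
    ext i j
    by_cases hj : j = k
    · subst hj
      rw [Matrix.mul_single_apply_same, mul_one, hentry]
      by_cases hik : i = j
      · subst hik; simp
      · rw [if_neg hik, (Matrix.single_apply_of_row_ne (Ne.symm hik) _ _ _)]
    · rw [Matrix.mul_single_apply_of_ne _ _ _ _ _ hj,
        Matrix.single_apply_of_col_ne _ _ (Ne.symm hj)]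
  -- F succ
  have hFsucc : ∀ k : Fin n, F ((k : ℕ) + 1) = F k.val + Matrix.single k k (1 : R) := by
    intro k
    ext i j
    by_cases hij : i = j
    · subst hij
      by_cases hik : i = k
      · subst hik
        simp [hF, Nat.lt_succ_iff, lt_irrefl]
      · have hvals : ((i : ℕ) < (k : ℕ) + 1) ↔ ((i : ℕ) < (k : ℕ)) := by
          rw [Nat.lt_succ_iff, lt_iff_le_and_ne]
          simp [Fin.val_eq_val, hik]
        simp [hF, hvals, Matrix.single_apply_of_row_ne (Ne.symm hik)]
    · have hs : Matrix.single k k (1:R) i j = 0 :=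
        Matrix.single_apply_of_ne _ _ _ _ _ (fun h => hij (h.1.symm.trans h.2))
      simp [hF, hij, hs]
  -- one step
  have hstep : ∀ k : Fin n, (U - F k.val * A) *
      ((1 : Matrix (Fin n) (Fin n) R) - Matrix.single k k 1 * A)
      = U - F ((k : ℕ) + 1) * A := by
    intro k
    rw [mul_sub, mul_one, ← mul_assoc, hcol, hFsucc, add_mul, ← sub_sub]
  -- main induction
  have main : ∀ k ≤ n, U * (l.take k).prod = U - F k * A := by
    intro k hk
    induction k with
    | zero =>
      have : F 0 = 0 := by ext i j; simp [hF]
      simp [this]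
    | succ m ih =>
      have hm' : m < n := hk
      have hm : m < l.length := by rw [hlen]; exact hm'
      rw [List.prod_take_succ _ _ hm, ← mul_assoc, ih (Nat.le_of_succ_le hk)]
      have hget : l[m] = (1 : Matrix (Fin n) (Fin n) R) -
          Matrix.single (⟨m, hm'⟩ : Fin n) ⟨m, hm'⟩ 1 * A := by
        simp [hl]
      rw [hget, hstep ⟨m, hm'⟩]
  have hfinal : U * l.prod = -Lm := by
    have h1 : l.take n = l := List.take_of_length_le hlen.le
    have h2 : F n = 1 := by
      ext i j
      by_cases hij : i = j
      · subst hij; simp [hF, i.isLt]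
      · simp [hF, hij, Matrix.one_apply_ne hij]
    have hmn := main n le_rfl
    rw [h1, h2, one_mul] at hmn
    rw [hmn]
    ext i j
    rcases lt_trichotomy i j with h | h | h
    · simp [hU, hLm, h.ne, h, asymm h]
    · subst h; norm_num [hU, hLm, hdiag]
    · simp [hU, hLm, h.ne', h, asymm h]
  -- U is invertible
  have hdet : U.det = 1 := by
    have hbt : U.BlockTriangular id := by
      intro i j hij
      simp only [id] at hij
      have h1 : ¬ i = j := hij.ne'
      have h2 : ¬ i < j := not_lt.mpr hij.le
      simp [hU, h1, h2]
    rw [Matrix.det_of_upperTriangular hbt]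
    simp [hU]
  have : Invertible U := U.invertibleOfIsUnitDet (by rw [hdet]; exact isUnit_one)
  calc l.prod = U⁻¹ * (U * l.prod) := (Matrix.inv_mul_cancel_left_of_invertible U l.prod).symm
    _ = U⁻¹ * (-Lm) := by rw [hfinal]
    _ = -(U⁻¹ * Lm) := by rw [Matrix.mul_neg]
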